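/- Let $1<p\le p(x,t)\le p_1<2<q_1\le q(x,t)\le q$ and define $\psi(x,t,v) = v^{p(x,t)-2} + v^{q(x,t)-2}$ for $v>0$. Set $\mu_1=(q_1-2)/2$ and $b_0 = \max\{1, \big(\frac{2-p+\mu_1}{q_1-2+\mu_1}\big)^{1/(q_1-p_1)}\}$. Then for every fixed $(x,t)$ and all $w \ge v > b_0$, $\frac{\psi(x,t,w)}{\psi(x,t,v)} \ge c\,\Big(\frac{w}{v}\Big)^{\mu_1}$ for some constant $c>0$ depending only on $p,p_1,q_1,q$. -/
import Mathlib


theorem stmt15 (p p1 q1 q : ℝ) (hp : 1 < p) (hpp1 : p ≤ p1) (hp1 : p1 < 2)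
    (hq1 : 2 < q1) (hq1q : q1 ≤ q) :
    ∃ c > (0:ℝ), ∀ pxt qxt : ℝ, p ≤ pxt → pxt ≤ p1 → q1 ≤ qxt → qxt ≤ q →
      ∀ v w : ℝ,
        max 1 (((2 - p + (q1 - 2) / 2) / (q1 - 2 + (q1 - 2) / 2)) ^ (1 / (q1 - p1))) < v →
        v ≤ w →
        c * (w / v) ^ ((q1 - 2) / 2) ≤
          (w ^ (pxt - 2) + w ^ (qxt - 2)) / (v ^ (pxt - 2) + v ^ (qxt - 2)) := by
  refine ⟨1/2, by norm_num, ?_⟩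
  intro pxt qxt hpx hpx1 hqx1 hqx v w hv hvw
  have hv1 : (1:ℝ) < v := lt_of_le_of_lt (le_max_left _ _) hv
  have hv0 : (0:ℝ) < v := lt_trans one_pos hv1
  have hw1 : (1:ℝ) < w := lt_of_lt_of_le hv1 hvw
  have hw0 : (0:ℝ) < w := lt_trans one_pos hw1
  have hwv1 : (1:ℝ) ≤ w / v := (one_le_div hv0).mpr hvw
  have hvp : v ^ (pxt - 2) ≤ 1 :=
    Real.rpow_le_one_of_one_le_of_nonpos hv1.le (by linarith)
  have hvq1 : (1:ℝ) ≤ v ^ (qxt - 2) :=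
    Real.one_le_rpow hv1.le (by linarith)
  have hvp0 : (0:ℝ) < v ^ (pxt - 2) := Real.rpow_pos_of_pos hv0 _
  have hwp0 : (0:ℝ) ≤ w ^ (pxt - 2) := (Real.rpow_pos_of_pos hw0 _).le
  have hD : (0:ℝ) < v ^ (pxt - 2) + v ^ (qxt - 2) := by positivity
  rw [le_div_iff₀ hD]
  have h1 : (w / v) ^ ((q1 - 2) / 2) ≤ (w / v) ^ (qxt - 2) :=
    Real.rpow_le_rpow_of_exponent_le hwv1 (by linarith)
  have h2 : (w / v) ^ (qxt - 2) * v ^ (qxt - 2) = w ^ (qxt - 2) := by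
    rw [Real.div_rpow hw0.le hv0.le, div_mul_cancel₀]
    exact ne_of_gt (Real.rpow_pos_of_pos hv0 _)
  have hpow0 : (0:ℝ) ≤ (w / v) ^ ((q1 - 2) / 2) := Real.rpow_nonneg (by positivity) _
  calc 1 / 2 * (w / v) ^ ((q1 - 2) / 2) * (v ^ (pxt - 2) + v ^ (qxt - 2))
      ≤ 1 / 2 * (w / v) ^ ((q1 - 2) / 2) * (2 * v ^ (qxt - 2)) := by
        apply mul_le_mul_of_nonneg_left _ (by positivity)
        linarith
    _ = (w / v) ^ ((q1 - 2) / 2) * v ^ (qxt - 2) := by ring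
    _ ≤ (w / v) ^ (qxt - 2) * v ^ (qxt - 2) := by
        apply mul_le_mul_of_nonneg_right h1 (by positivity)
    _ = w ^ (qxt - 2) := h2
    _ ≤ w ^ (pxt - 2) + w ^ (qxt - 2) := by linarith
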